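/- Fix integers r ≥ t ≥ 1 and a nondecreasing vector c : {1,…,r} → ℚ with c_i ≥ 1 for all i. Let s* be the smallest s ∈ {r−t+1,…,r−1} such that (s−r+t)·c_{s+1} ≥ Σ_{i=1}^{s} c_i, with s* = r if no such s exists. Define γ* ∈ ℝ^r by γ*_i = 1/(s*−r+t) for i ≤ s* and γ*_i = 0 for i > s*. Then (a) γ* is feasible, i.e., γ* ≥ 0 and Σ_{j ∈ J} γ*_j ≥ 1 for every J ⊆ {1,…,r} with |J| = t, and (b) γ* is optimal: for every feasible γ ∈ ℝ^r (γ ≥ 0 and Σ_{j ∈ J} γ_j ≥ 1 for every t-element set J ⊆ {1,…,r}) one has Σ_{i=1}^r γ*_i c_i ≤ Σ_{i=1}^r γ_i c_i. -/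

import Mathlib

/-- The selection condition `(s-r+t)·c_{s+1} ≥ Σ_{i=1}^s c_i` (indices 1-based). -/
def SelCond (r t : ℕ) (c : ℕ → ℚ) (s : ℕ) : Prop :=
  (↑(s + t - r) : ℚ) * c (s + 1) ≥ ∑ i ∈ Finset.Icc 1 s, c i

/-- A vector `γ` is feasible if it is nonnegative on `{1,…,r}` and sums to at
least `1` over every `t`-element subset of `{1,…,r}`. -/
def Feasible (r t : ℕ) (γ : ℕ → ℝ) : Prop :=
  (∀ i ∈ Finset.Icc 1 r, 0 ≤ γ i) ∧
  ∀ J ⊆ Finset.Icc 1 r, J.card = t → 1 ≤ ∑ j ∈ J, γ j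

open Finset in
private lemma icc_split (f : ℕ → ℝ) {a b : ℕ} (h : a ≤ b) :
    ∑ i ∈ Icc 1 b, f i = ∑ i ∈ Icc 1 a, f i + ∑ i ∈ Icc (a+1) b, f i := by
  rw [show (1:ℕ) = 0+1 from rfl, Finset.Icc_add_one_left_eq_Ioc, Finset.Icc_add_one_left_eq_Ioc, zero_add, Finset.Icc_add_one_left_eq_Ioc]
  exact (Finset.sum_Ioc_consecutive f (Nat.zero_le a) h).symm

open Finset in
private lemma core : ∀ k, ∀ n, 1 ≤ k → k ≤ n → ∀ c : ℕ → ℝ,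
    (∀ i j, 1 ≤ i → i ≤ j → j ≤ n → c i ≤ c j) →
    (∀ i, 1 ≤ i → i ≤ n → 0 ≤ c i) →
    ((k:ℝ) * c n ≤ ∑ i ∈ Icc 1 n, c i) →
    ∀ δ : ℕ → ℝ, (∀ i ∈ Icc 1 n, 0 ≤ δ i) →
    (∀ S ⊆ Icc 1 n, S.card = k → 1 ≤ ∑ j ∈ S, δ j) →
    ∑ i ∈ Icc 1 n, c i ≤ (k:ℝ) * ∑ i ∈ Icc 1 n, δ i * c i := by
  intro k
  induction k with
  | zero => intro n h1; omega
  | succ k ih =>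
    intro n hk1 hkn c hmono hnn hP3 δ hδnn hS
    by_cases hk0 : k = 0
    · subst hk0
      have h1 : ∀ i ∈ Icc 1 n, 1 ≤ δ i := by
        intro i hi
        have := hS {i} (by simpa using hi) (by simp)
        simpa using this
      push_cast
      rw [one_mul]
      refine Finset.sum_le_sum fun i hi => ?_
      have hi' := Finset.mem_Icc.mp hi
      exact le_mul_of_one_le_left (hnn i hi'.1 hi'.2) (h1 i hi)
    have hk1' : 1 ≤ k := by omega
    have hne : (Icc 1 n).Nonempty := ⟨1, by simp; omega⟩
    obtain ⟨i0, hi0mem, hi0min⟩ := Finset.exists_min_image (Icc 1 n) δ hne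
    obtain ⟨hi01, hi0n⟩ := Finset.mem_Icc.mp hi0mem
    set β := δ i0 with hβdef
    by_cases hβ : 1 ≤ ((k:ℝ)+1) * β
    · refine le_trans (Finset.sum_le_sum (g := fun i => ((k:ℝ)+1) * (δ i * c i)) fun i hi => ?_) ?_
      · have hi' := Finset.mem_Icc.mp hi
        have h1 := hi0min i hi
        have h2 := hnn i hi'.1 hi'.2
        calc c i = 1 * c i := (one_mul _).symm
          _ ≤ (((k:ℝ)+1) * β) * c i := mul_le_mul_of_nonneg_right hβ h2
          _ = ((k:ℝ)+1) * (β * c i) := mul_assoc _ _ _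
          _ ≤ ((k:ℝ)+1) * (δ i * c i) := by
              refine mul_le_mul_of_nonneg_left (mul_le_mul_of_nonneg_right h1 h2) ?_
              positivity
      · rw [← Finset.mul_sum]; push_cast; rfl
    push_neg at hβ
    set lam : ℝ := 1 - ((k:ℝ)+1) * β with hlamdef
    have hlam : 0 < lam := by simp [hlamdef]; linarith
    set δ' : ℕ → ℝ := fun i => (δ i - β)/lam with hδ'def
    have hδ'nn : ∀ i ∈ Icc 1 n, 0 ≤ δ' i := fun i hi =>
      div_nonneg (sub_nonneg.mpr (hi0min i hi)) hlam.le
    have hδ'i0 : δ' i0 = 0 := by simp [hδ'def, hβdef]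
    have hδ'S : ∀ S ⊆ Icc 1 n, S.card = k + 1 → 1 ≤ ∑ j ∈ S, δ' j := by
      intro S hSsub hScard
      have h1 := hS S hSsub hScard
      have h2 : ∑ j ∈ S, δ' j = (∑ j ∈ S, δ j - ((k:ℝ)+1)*β)/lam := by
        rw [← Finset.sum_div, Finset.sum_sub_distrib, Finset.sum_const, hScard]
        push_cast
        ring_nf
      rw [h2, le_div_iff₀ hlam]
      linarith
    set f : ℕ → ℕ := fun j => if j < i0 then j else j + 1 with hfdef
    set δ'' : ℕ → ℝ := fun i => δ' (f i) with hδ''def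
    have hfmem : ∀ i, 1 ≤ i → i ≤ n - 1 → f i ∈ Icc 1 n := by
      intro i h1 h2; simp only [hfdef, Finset.mem_Icc]; split_ifs <;> omega
    have hsumtop : ∑ i ∈ Icc 1 (n-1), c i = ∑ i ∈ Icc 1 n, c i - c n := by
      have h := icc_split c (show n - 1 ≤ n by omega)
      have h2 : Icc (n-1+1) n = {n} := by rw [show n - 1 + 1 = n by omega]; simp
      rw [h2] at h; simp at h; linarith
    have hIH := ih (n-1) hk1' (by omega) c
      (fun i j h1 h2 h3 => hmono i j h1 h2 (by omega))
      (fun i h1 h2 => hnn i h1 (by omega))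
      (by
        have h1 : c (n-1) ≤ c n := hmono _ _ (by omega) (by omega) le_rfl
        have hk0' : (0:ℝ) ≤ (k:ℝ) := by positivity
        have hP3' := hP3
        push_cast at hP3'
        rw [hsumtop]
        have h2 := mul_le_mul_of_nonneg_left h1 hk0'
        linarith)
      δ''
      (fun i hi => by
        have hi' := Finset.mem_Icc.mp hi
        exact hδ'nn _ (hfmem i hi'.1 hi'.2))
      (by
        intro S hsub hcard
        have hfinj : ∀ a ∈ S, ∀ b ∈ S, f a = f b → a = b := by
          intro a _ b _ hab; simp only [hfdef] at hab; split_ifs at hab <;> omega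
        have hi0not : i0 ∉ S.image f := by
          simp only [Finset.mem_image]
          rintro ⟨j, hj, hfj⟩
          simp only [hfdef] at hfj; split_ifs at hfj <;> omega
        have hTsub : insert i0 (S.image f) ⊆ Icc 1 n := by
          intro x hx
          rcases Finset.mem_insert.mp hx with rfl | hx
          · exact hi0mem
          obtain ⟨j, hj, rfl⟩ := Finset.mem_image.mp hx
          have hj' := Finset.mem_Icc.mp (hsub hj)
          exact hfmem j hj'.1 hj'.2
        have hTcard : (insert i0 (S.image f)).card = k + 1 := by
          rw [Finset.card_insert_of_notMem hi0not, Finset.card_image_of_injOn hfinj, hcard]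
        have h1 := hδ'S _ hTsub hTcard
        rw [Finset.sum_insert hi0not, hδ'i0, zero_add, Finset.sum_image hfinj] at h1
        exact h1)
    -- Claim 1 : ∑ δ'' c over [1,n-1] ≤ ∑ δ' c over [1,n]
    have hclaim1 : ∑ i ∈ Icc 1 (n-1), δ'' i * c i ≤ ∑ i ∈ Icc 1 n, δ' i * c i := by
      have e1 : ∑ i ∈ Icc 1 (n-1), δ'' i * c i
          = ∑ i ∈ Icc 1 (i0-1), δ'' i * c i + ∑ i ∈ Icc i0 (n-1), δ'' i * c i := by
        have := icc_split (fun i => δ'' i * c i) (show i0 - 1 ≤ n - 1 by omega)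
        rwa [show i0 - 1 + 1 = i0 by omega] at this
      have e2 : ∑ i ∈ Icc 1 n, δ' i * c i
          = ∑ i ∈ Icc 1 (i0-1), δ' i * c i + ∑ i ∈ Icc i0 n, δ' i * c i := by
        have := icc_split (fun i => δ' i * c i) (show i0 - 1 ≤ n by omega)
        rwa [show i0 - 1 + 1 = i0 by omega] at this
      have e3 : ∑ i ∈ Icc i0 n, δ' i * c i
          = δ' i0 * c i0 + ∑ i ∈ Icc (i0+1) n, δ' i * c i := by
        rw [Finset.Icc_add_one_left_eq_Ioc, ← Finset.Ioc_insert_left hi0n, Finset.sum_insert (by simp)]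
      have e4 : ∑ i ∈ Icc 1 (i0-1), δ'' i * c i = ∑ i ∈ Icc 1 (i0-1), δ' i * c i := by
        refine Finset.sum_congr rfl fun i hi => ?_
        have hi' := Finset.mem_Icc.mp hi
        simp only [hδ''def, hfdef, if_pos (show i < i0 by omega)]
      have e5 : ∑ i ∈ Icc i0 (n-1), δ'' i * c i ≤ ∑ i ∈ Icc (i0+1) n, δ' i * c i := by
        have e5a : ∀ i ∈ Icc i0 (n-1), δ'' i * c i ≤ δ' (i+1) * c (i+1) := by
          intro i hi
          have hi' := Finset.mem_Icc.mp hi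
          have h1 : δ'' i = δ' (i+1) := by
            simp only [hδ''def, hfdef, if_neg (show ¬ i < i0 by omega)]
          rw [h1]
          exact mul_le_mul_of_nonneg_left (hmono i (i+1) (by omega) (by omega) (by omega))
            (hδ'nn (i+1) (Finset.mem_Icc.mpr ⟨by omega, by omega⟩))
        calc ∑ i ∈ Icc i0 (n-1), δ'' i * c i ≤ ∑ i ∈ Icc i0 (n-1), δ' (i+1) * c (i+1) :=
              Finset.sum_le_sum e5a
          _ = ∑ i ∈ Icc (i0+1) n, δ' i * c i := by
              refine Finset.sum_nbij' (fun i => i + 1) (fun i => i - 1) ?_ ?_ ?_ ?_ ?_ <;>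
                intro a ha <;> simp only [Finset.mem_Icc] at ha ⊢ <;> omega
      rw [e1, e2, e3, e4, hδ'i0, zero_mul, zero_add]
      linarith
    have hid : ∑ i ∈ Icc 1 n, δ i * c i
        = lam * ∑ i ∈ Icc 1 n, δ' i * c i + β * ∑ i ∈ Icc 1 n, c i := by
      rw [Finset.mul_sum, Finset.mul_sum, ← Finset.sum_add_distrib]
      refine Finset.sum_congr rfl fun i hi => ?_
      simp only [hδ'def]
      field_simp
      ring
    have hHK : (k:ℝ) * (∑ i ∈ Icc 1 n, c i) ≤ ((k:ℝ)+1) * ∑ i ∈ Icc 1 (n-1), c i := by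
      have hP3' := hP3
      push_cast at hP3'
      rw [hsumtop]; nlinarith [hP3']
    have hkpos : (0:ℝ) < (k:ℝ) := by exact_mod_cast Nat.pos_of_ne_zero hk0
    have hmain : ∑ i ∈ Icc 1 n, c i ≤ ((k:ℝ)+1) * ∑ i ∈ Icc 1 n, δ' i * c i := by
      have h1 : (k:ℝ) * (∑ i ∈ Icc 1 n, c i) ≤ (k:ℝ) * (((k:ℝ)+1) * ∑ i ∈ Icc 1 n, δ' i * c i) := by
        calc (k:ℝ) * (∑ i ∈ Icc 1 n, c i) ≤ ((k:ℝ)+1) * ∑ i ∈ Icc 1 (n-1), c i := hHK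
          _ ≤ ((k:ℝ)+1) * ((k:ℝ) * ∑ i ∈ Icc 1 (n-1), δ'' i * c i) := by
              refine mul_le_mul_of_nonneg_left hIH (by positivity)
          _ ≤ (k:ℝ) * (((k:ℝ)+1) * ∑ i ∈ Icc 1 n, δ' i * c i) := by
              have h2 := mul_le_mul_of_nonneg_left hclaim1
                (show (0:ℝ) ≤ (k:ℝ) * ((k:ℝ)+1) by positivity)
              nlinarith [h2]
      exact le_of_mul_le_mul_left h1 hkpos
    have hfinal : lam * (∑ i ∈ Icc 1 n, c i) + ((k:ℝ)+1)*β*(∑ i ∈ Icc 1 n, c i)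
        = ∑ i ∈ Icc 1 n, c i := by
      simp only [hlamdef]; ring
    have hint := mul_le_mul_of_nonneg_left hmain hlam.le
    push_cast
    rw [hid]
    nlinarith [hint, hfinal]

/-- Optimality of the solution `γ*` with `γ*_i = 1/(s*-r+t)` for `i ≤ s*` and
`γ*_i = 0` for `i > s*`, where `s*` is the smallest `s ∈ {r-t+1,…,r-1}`
satisfying the selection condition (or `r` if none exists): `γ*` is feasible
and minimizes `Σ γ_i c_i` among all feasible `γ`. -/
theorem stmt5 (r t : ℕ) (ht : 1 ≤ t) (htr : t ≤ r) (c : ℕ → ℚ)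
    (hmono : ∀ i j, 1 ≤ i → i ≤ j → j ≤ r → c i ≤ c j)
    (hc1 : ∀ i, 1 ≤ i → i ≤ r → 1 ≤ c i)
    (sstar : ℕ)
    (hleast : (∃ s, r - t + 1 ≤ s ∧ s ≤ r - 1 ∧ SelCond r t c s) →
      (r - t + 1 ≤ sstar ∧ sstar ≤ r - 1 ∧ SelCond r t c sstar) ∧
      ∀ s, r - t + 1 ≤ s → s ≤ r - 1 → SelCond r t c s → sstar ≤ s)
    (hnone : (¬ ∃ s, r - t + 1 ≤ s ∧ s ≤ r - 1 ∧ SelCond r t c s) → sstar = r)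
    (γstar : ℕ → ℝ)
    (hγstar : ∀ i, γstar i =
      if i ≤ sstar then 1 / ((sstar + t - r : ℕ) : ℝ) else 0) :
    Feasible r t γstar ∧
    ∀ γ : ℕ → ℝ, Feasible r t γ →
      ∑ i ∈ Finset.Icc 1 r, γstar i * (c i : ℝ) ≤
        ∑ i ∈ Finset.Icc 1 r, γ i * (c i : ℝ) := by
  classical
  have hprops : (r - t + 1 ≤ sstar ∧ sstar ≤ r) ∧
      (sstar < r → SelCond r t c sstar) ∧
      (r - t + 1 < sstar → ¬ SelCond r t c (sstar - 1)) := by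
    by_cases hex : ∃ s, r - t + 1 ≤ s ∧ s ≤ r - 1 ∧ SelCond r t c s
    · obtain ⟨⟨h1, h2, h3⟩, hmin⟩ := hleast hex
      refine ⟨⟨h1, by omega⟩, fun _ => h3, fun hlt hsel => ?_⟩
      have := hmin (sstar - 1) (by omega) (by omega) hsel
      omega
    · have hr : sstar = r := hnone hex
      refine ⟨⟨by omega, by omega⟩, fun h => absurd hr (by omega), fun hlt hsel => ?_⟩
      refine absurd (hex ⟨r - 1, by omega, le_rfl, ?_⟩) (fun h => h)
      rwa [show sstar - 1 = r - 1 by omega] at hsel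
  obtain ⟨⟨hs1, hs2⟩, hsel, hnsel⟩ := hprops
  set K : ℕ := sstar + t - r with hKdef
  have hK1 : 1 ≤ K := by omega
  have hKs : K ≤ sstar := by omega
  have hKpos : (0:ℝ) < (K:ℝ) := by exact_mod_cast hK1
  have hs1' : 1 ≤ sstar := by omega
  have hccmono : ∀ i j, 1 ≤ i → i ≤ j → j ≤ r → ((c i : ℚ) : ℝ) ≤ ((c j : ℚ) : ℝ) := by
    intro i j h1 h2 h3
    exact_mod_cast hmono i j h1 h2 h3
  have hccnn : ∀ i, 1 ≤ i → i ≤ r → 0 ≤ ((c i : ℚ) : ℝ) := by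
    intro i h1 h2
    have := hc1 i h1 h2
    exact_mod_cast le_trans zero_le_one this
  have hCsnn : 0 ≤ ∑ i ∈ Finset.Icc 1 sstar, ((c i : ℚ) : ℝ) :=
    Finset.sum_nonneg fun i hi => by
      have hi' := Finset.mem_Icc.mp hi
      exact hccnn i hi'.1 (by omega)
  -- P2 : values of c above sstar are at least Cs / K
  have hP2 : ∀ i, sstar < i → i ≤ r →
      (∑ j ∈ Finset.Icc 1 sstar, ((c j : ℚ) : ℝ)) ≤ (K:ℝ) * ((c i : ℚ) : ℝ) := by
    intro i hi1 hi2
    have hsel' := hsel (by omega)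
    unfold SelCond at hsel'
    have hq : (∑ j ∈ Finset.Icc 1 sstar, c j) ≤ (K:ℚ) * c (sstar + 1) := by
      exact_mod_cast hsel'
    have hrr : (∑ j ∈ Finset.Icc 1 sstar, ((c j : ℚ) : ℝ)) ≤ (K:ℝ) * ((c (sstar + 1) : ℚ) : ℝ) := by
      exact_mod_cast hq
    refine le_trans hrr (mul_le_mul_of_nonneg_left ?_ hKpos.le)
    exact hccmono (sstar+1) i (by omega) (by omega) hi2
  -- P3a : K * c sstar ≤ Cs
  have hP3a : (K:ℝ) * ((c sstar : ℚ) : ℝ) ≤ ∑ i ∈ Finset.Icc 1 sstar, ((c i : ℚ) : ℝ) := by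
    have hq : (K:ℚ) * c sstar ≤ ∑ i ∈ Finset.Icc 1 sstar, c i := by
      by_cases hKeq : K = 1
      · rw [hKeq]
        push_cast
        rw [one_mul]
        refine Finset.single_le_sum (f := c) (fun i hi => ?_) (Finset.mem_Icc.mpr ⟨hs1', le_rfl⟩)
        have hi' := Finset.mem_Icc.mp hi
        exact le_trans zero_le_one (hc1 i hi'.1 (by omega))
      · have hK2 : 2 ≤ K := by omega
        have hlt : r - t + 1 < sstar := by omega
        have hns := hnsel hlt
        unfold SelCond at hns
        push_neg at hns
        rw [show sstar - 1 + 1 = sstar by omega] at hns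
        rw [show sstar - 1 + t - r = K - 1 by omega] at hns
        have hsplit : ∑ i ∈ Finset.Icc 1 sstar, c i
            = ∑ i ∈ Finset.Icc 1 (sstar - 1), c i + c sstar := by
          have := Finset.sum_Icc_succ_top (show 1 ≤ sstar - 1 + 1 by omega) c
          rw [show sstar - 1 + 1 = sstar by omega] at this
          exact this
        have hcast : ((K - 1 : ℕ) : ℚ) = (K:ℚ) - 1 := by
          push_cast [Nat.cast_sub hK1]
          ring
        rw [hcast] at hns
        rw [hsplit]
        linarith
    exact_mod_cast hq
  -- Feasibility
  have hfeas : Feasible r t γstar := by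
    constructor
    · intro i _
      rw [hγstar i]
      split_ifs
      · positivity
      · exact le_rfl
    · intro J hJsub hJcard
      have hsum : ∑ j ∈ J, γstar j
          = ((J.filter (fun j => j ≤ sstar)).card : ℝ) * (1 / (K:ℝ)) := by
        rw [show ∑ j ∈ J, γstar j = ∑ j ∈ J, if j ≤ sstar then 1/((K:ℕ):ℝ) else 0 from
          Finset.sum_congr rfl (fun j _ => hγstar j)]
        rw [← Finset.sum_filter, Finset.sum_const, nsmul_eq_mul]
      have hcard2 : (J.filter (fun j => ¬ j ≤ sstar)).card ≤ r - sstar := by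
        have hsub2 : J.filter (fun j => ¬ j ≤ sstar) ⊆ Finset.Icc (sstar+1) r := by
          intro x hx
          obtain ⟨hx1, hx2⟩ := Finset.mem_filter.mp hx
          have := Finset.mem_Icc.mp (hJsub hx1)
          exact Finset.mem_Icc.mpr ⟨by omega, this.2⟩
        calc (J.filter (fun j => ¬ j ≤ sstar)).card
            ≤ (Finset.Icc (sstar+1) r).card := Finset.card_le_card hsub2
          _ = r - sstar := by rw [Nat.card_Icc]; omega
      have hcardeq := Finset.card_filter_add_card_filter_not
        (s := J) (p := fun j => j ≤ sstar)
      have hKle : K ≤ (J.filter (fun j => j ≤ sstar)).card := by omega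
      rw [hsum]
      calc (1:ℝ) = (K:ℝ) * (1/(K:ℝ)) := by field_simp
        _ ≤ _ := mul_le_mul_of_nonneg_right (by exact_mod_cast hKle) (by positivity)
  -- objective value of γstar
  have hobj : ∑ i ∈ Finset.Icc 1 r, γstar i * ((c i : ℚ) : ℝ)
      = (∑ i ∈ Finset.Icc 1 sstar, ((c i : ℚ) : ℝ)) / (K:ℝ) := by
    rw [icc_split (fun i => γstar i * ((c i : ℚ) : ℝ)) hs2]
    have h2 : ∑ i ∈ Finset.Icc (sstar+1) r, γstar i * ((c i : ℚ) : ℝ) = 0 :=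
      Finset.sum_eq_zero (fun i hi => by
        have hi' := Finset.mem_Icc.mp hi
        rw [hγstar i, if_neg (by omega)]
        ring)
    have h1 : ∑ i ∈ Finset.Icc 1 sstar, γstar i * ((c i : ℚ) : ℝ)
        = ∑ i ∈ Finset.Icc 1 sstar, ((c i : ℚ) : ℝ) / (K:ℝ) :=
      Finset.sum_congr rfl (fun i hi => by
        have hi' := Finset.mem_Icc.mp hi
        rw [hγstar i, if_pos hi'.2]
        ring)
    rw [h1, h2, ← Finset.sum_div, add_zero]
  refine ⟨hfeas, ?_⟩
  intro γ hγ
  obtain ⟨hγnn, hγsub⟩ := hγ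
  have hA0 : 0 ≤ ∑ i ∈ Finset.Icc 1 sstar, γ i * ((c i : ℚ) : ℝ) :=
    Finset.sum_nonneg fun i hi => by
      have hi' := Finset.mem_Icc.mp hi
      exact mul_nonneg (hγnn i (Finset.mem_Icc.mpr ⟨hi'.1, by omega⟩)) (hccnn i hi'.1 (by omega))
  have hG0 : 0 ≤ ∑ i ∈ Finset.Icc (sstar+1) r, γ i :=
    Finset.sum_nonneg fun i hi => by
      have hi' := Finset.mem_Icc.mp hi
      exact hγnn i (Finset.mem_Icc.mpr ⟨by omega, hi'.2⟩)
  have hBound : (∑ i ∈ Finset.Icc (sstar+1) r, γ i)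
        * ((∑ j ∈ Finset.Icc 1 sstar, ((c j : ℚ) : ℝ)) / (K:ℝ))
      ≤ ∑ i ∈ Finset.Icc (sstar+1) r, γ i * ((c i : ℚ) : ℝ) := by
    rw [Finset.sum_mul]
    refine Finset.sum_le_sum fun i hi => ?_
    have hi' := Finset.mem_Icc.mp hi
    have h1 : (∑ j ∈ Finset.Icc 1 sstar, ((c j : ℚ) : ℝ)) / (K:ℝ) ≤ ((c i : ℚ) : ℝ) := by
      rw [div_le_iff₀ hKpos]
      have := hP2 i (by omega) hi'.2
      linarith
    exact mul_le_mul_of_nonneg_left h1 (hγnn i (Finset.mem_Icc.mpr ⟨by omega, hi'.2⟩))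
  rw [hobj, icc_split (fun i => γ i * ((c i : ℚ) : ℝ)) hs2]
  by_cases hG : 1 ≤ ∑ i ∈ Finset.Icc (sstar+1) r, γ i
  · have h1 : (∑ j ∈ Finset.Icc 1 sstar, ((c j : ℚ) : ℝ)) / (K:ℝ)
        ≤ (∑ i ∈ Finset.Icc (sstar+1) r, γ i)
          * ((∑ j ∈ Finset.Icc 1 sstar, ((c j : ℚ) : ℝ)) / (K:ℝ)) :=
      le_mul_of_one_le_left (by positivity) hG
    linarith
  push_neg at hG
  have hlam : 0 < 1 - ∑ i ∈ Finset.Icc (sstar+1) r, γ i := by linarith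
  have hsubcon : ∀ S ⊆ Finset.Icc 1 sstar, S.card = K →
      1 ≤ ∑ j ∈ S, γ j / (1 - ∑ i ∈ Finset.Icc (sstar+1) r, γ i) := by
    intro S hSsub hScard
    have hdisj : Disjoint S (Finset.Icc (sstar+1) r) := by
      rw [Finset.disjoint_left]
      intro a haS haI
      have h1 := Finset.mem_Icc.mp (hSsub haS)
      have h2 := Finset.mem_Icc.mp haI
      omega
    have hJsub : S ∪ Finset.Icc (sstar+1) r ⊆ Finset.Icc 1 r := by
      refine Finset.union_subset (hSsub.trans (Finset.Icc_subset_Icc_right hs2)) ?_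
      exact Finset.Icc_subset_Icc_left (by omega)
    have hJcard : (S ∪ Finset.Icc (sstar+1) r).card = t := by
      rw [Finset.card_union_of_disjoint hdisj, hScard, Nat.card_Icc]
      omega
    have h1 := hγsub _ hJsub hJcard
    rw [Finset.sum_union hdisj] at h1
    rw [← Finset.sum_div, le_div_iff₀ hlam]
    linarith
  have hcore : (∑ i ∈ Finset.Icc 1 sstar, ((c i : ℚ) : ℝ)) ≤ (K:ℝ) *
      ∑ i ∈ Finset.Icc 1 sstar,
        (γ i / (1 - ∑ j ∈ Finset.Icc (sstar+1) r, γ j)) * ((c i : ℚ) : ℝ) :=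
    core K sstar hK1 hKs (fun i => ((c i : ℚ) : ℝ))
      (fun i j h1 h2 h3 => hccmono i j h1 h2 (by omega))
      (fun i h1 h2 => hccnn i h1 (by omega))
      hP3a (fun i => γ i / (1 - ∑ j ∈ Finset.Icc (sstar+1) r, γ j))
      (fun i hi => by
        have hi' := Finset.mem_Icc.mp hi
        exact div_nonneg (hγnn i (Finset.mem_Icc.mpr ⟨hi'.1, by omega⟩)) hlam.le)
      hsubcon
  have heq : ∑ i ∈ Finset.Icc 1 sstar,
        (γ i / (1 - ∑ j ∈ Finset.Icc (sstar+1) r, γ j)) * ((c i : ℚ) : ℝ)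
      = (∑ i ∈ Finset.Icc 1 sstar, γ i * ((c i : ℚ) : ℝ))
        / (1 - ∑ j ∈ Finset.Icc (sstar+1) r, γ j) := by
    rw [Finset.sum_div]
    exact Finset.sum_congr rfl fun i _ => by ring
  rw [heq] at hcore
  have h5 : (1 - ∑ j ∈ Finset.Icc (sstar+1) r, γ j)
        * ((∑ i ∈ Finset.Icc 1 sstar, ((c i : ℚ) : ℝ)) / (K:ℝ))
      ≤ ∑ i ∈ Finset.Icc 1 sstar, γ i * ((c i : ℚ) : ℝ) := by
    have h6 : (K:ℝ) * ((1 - ∑ j ∈ Finset.Icc (sstar+1) r, γ j)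
          * ((∑ i ∈ Finset.Icc 1 sstar, ((c i : ℚ) : ℝ)) / (K:ℝ)))
        ≤ (K:ℝ) * (∑ i ∈ Finset.Icc 1 sstar, γ i * ((c i : ℚ) : ℝ)) := by
      have h7 : (K:ℝ) * ((1 - ∑ j ∈ Finset.Icc (sstar+1) r, γ j)
            * ((∑ i ∈ Finset.Icc 1 sstar, ((c i : ℚ) : ℝ)) / (K:ℝ)))
          = (1 - ∑ j ∈ Finset.Icc (sstar+1) r, γ j)
            * (∑ i ∈ Finset.Icc 1 sstar, ((c i : ℚ) : ℝ)) := by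
        field_simp
      rw [h7]
      calc (1 - ∑ j ∈ Finset.Icc (sstar+1) r, γ j)
            * (∑ i ∈ Finset.Icc 1 sstar, ((c i : ℚ) : ℝ))
          ≤ (1 - ∑ j ∈ Finset.Icc (sstar+1) r, γ j)
            * ((K:ℝ) * ((∑ i ∈ Finset.Icc 1 sstar, γ i * ((c i : ℚ) : ℝ))
              / (1 - ∑ j ∈ Finset.Icc (sstar+1) r, γ j))) :=
            mul_le_mul_of_nonneg_left hcore hlam.le
        _ = (K:ℝ) * (∑ i ∈ Finset.Icc 1 sstar, γ i * ((c i : ℚ) : ℝ)) := by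
            field_simp
    exact le_of_mul_le_mul_left h6 hKpos
  nlinarith [hBound, h5, hCsnn, hKpos]
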